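/- arXiv:1106.1663 — 3 statements merged into one kernel-verified Lean document; each statement's English description precedes it below -/
import Mathlib

section
/- Let Q be a weighted permutation of order n, let Z_Q be its associated step function, and let τ be a permutation of length m with 1<m<n. Then (1 − m/n)^m · t(τ,Q) ≤ t(τ,Z_Q) ≤ t(τ,Q) + (m+2)!/n. -/
open MeasureTheory Filter Set

open scoped Classical

noncomputable section

/-- The number of occurrences of the pattern `τ` in the permutation `π`:
increasing tuples `x₁ < ... < x_k` such that `π` restricted to them has the
same relative order as `τ`. -/
def occCount {k n : ℕ} (τ : Equiv.Perm (Fin k)) (π : Equiv.Perm (Fin n)) : ℕ :=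
  Set.ncard {x : Fin k → Fin n | StrictMono x ∧ ∀ i j : Fin k, π (x i) < π (x j) ↔ τ i < τ j}

/-- The subpermutation density `t(τ, π)`. -/
def densP {k n : ℕ} (τ : Equiv.Perm (Fin k)) (π : Equiv.Perm (Fin n)) : ℝ :=
  if k ≤ n then (occCount τ π : ℝ) / (n.choose k : ℝ) else 0

/-- `F` is a cumulative distribution function on `[0,1]`: non-decreasing,
left-continuous, `F 0 = 0`, with values in `[0,1]`. -/
def IsCDF (F : ℝ → ℝ) : Prop :=
  MonotoneOn F (Set.Icc 0 1) ∧
    (∀ a ∈ Set.Ioc (0:ℝ) 1, Tendsto F (nhdsWithin a (Set.Iio a)) (nhds (F a))) ∧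
    F 0 = 0 ∧ ∀ y ∈ Set.Icc (0:ℝ) 1, F y ∈ Set.Icc (0:ℝ) 1

/-- `Z` is a limit permutation. -/
def LimitPerm (Z : ℝ → ℝ → ℝ) : Prop :=
  Measurable (fun p : Set.Icc (0:ℝ) 1 × Set.Icc (0:ℝ) 1 => Z (p.1 : ℝ) (p.2 : ℝ)) ∧
    (∀ x ∈ Set.Icc (0:ℝ) 1,
      IsCDF (Z x) ∧ Tendsto (Z x) (nhdsWithin 0 (Set.Ioi 0)) (nhds (Z x 0)) ∧ Z x 1 = 1) ∧
    ∀ y ∈ Set.Icc (0:ℝ) 1, (∫ x in Set.Icc (0:ℝ) 1, Z x y) = y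

/-- `μ x` is the Lebesgue–Stieltjes probability measure of the cdf `Z x`, for each
`x ∈ [0,1]`. -/
def LSFamily (Z : ℝ → ℝ → ℝ) (μ : ℝ → Measure ℝ) : Prop :=
  ∀ x ∈ Set.Icc (0:ℝ) 1,
    IsProbabilityMeasure (μ x) ∧ μ x (Set.Icc 0 1) = 1 ∧
      ∀ a b : ℝ, 0 ≤ a → a ≤ b → b ≤ 1 →
        μ x (Set.Ico a b) = ENNReal.ofReal (Z x b - Z x a)

/-- The set of increasing `m`-tuples `0 ≤ y₁ < y₂ < ... < y_m ≤ 1`. -/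
def incSimplex (m : ℕ) : Set (Fin m → ℝ) :=
  {y | StrictMono y ∧ ∀ i, y i ∈ Set.Icc (0:ℝ) 1}

/-- The core function `L_{τ,Z}` of a limit permutation, expressed through the
associated family `μ` of Lebesgue–Stieltjes measures: the product measure
`μ_{x_{τ⁻¹(1)}} × ... × μ_{x_{τ⁻¹(m)}}` of the simplex `{y₁ < ... < y_m}`. -/
def coreFn {m : ℕ} (τ : Equiv.Perm (Fin m)) (μ : ℝ → Measure ℝ) (x : Fin m → ℝ) : ℝ :=
  ((Measure.pi fun i => μ (x (τ.symm i))) (incSimplex m)).toReal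

/-- The subpermutation density `t(τ, Z)` of `τ` in a limit permutation `Z`,
expressed through the associated family `μ` of Lebesgue–Stieltjes measures. -/
def densL {m : ℕ} (τ : Equiv.Perm (Fin m)) (μ : ℝ → Measure ℝ) : ℝ :=
  (Nat.factorial m : ℝ) * ∫ x in incSimplex m, coreFn τ μ x

/-- The rectangular distance between two families of measures (coming from
functions `[0,1]² → [0,1]` whose sections are cdfs). -/
def rectDist (μ₁ μ₂ : ℝ → Measure ℝ) : ℝ :=
  sSup {d : ℝ | ∃ x₁ x₂ α₁ α₂ : ℝ,
    0 ≤ x₁ ∧ x₁ < x₂ ∧ x₂ ≤ 1 ∧ 0 ≤ α₁ ∧ α₁ < α₂ ∧ α₂ ≤ 1 ∧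
    d = |(∫ x in Set.Icc x₁ x₂, (μ₁ x (Set.Icc α₁ α₂)).toReal) -
          ∫ x in Set.Icc x₁ x₂, (μ₂ x (Set.Icc α₁ α₂)).toReal|}

/-- A weighted permutation of order `k`; entries are 0-based, so `Q i j`
stands for `Q(i+1, j+1)` in the 1-based notation. -/
def WeightedPerm {k : ℕ} (Q : Fin k → Fin k → ℝ) : Prop :=
  (∀ i j, Q i j ∈ Set.Icc (0:ℝ) 1) ∧ (∀ i, Monotone (Q i)) ∧
    ∀ j : Fin k, (j : ℝ) ≤ ∑ i, Q i j ∧ ∑ i, Q i j ≤ (j : ℝ) + 1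

/-- `Q` extended by the conventions `Q(i,0) = 0` and `Q(i,a) = 1` for `a ≥ k+1`;
the second argument `a : ℕ` is 1-based. -/
def Qext {k : ℕ} (Q : Fin k → Fin k → ℝ) (i : Fin k) (a : ℕ) : ℝ :=
  if h : 1 ≤ a ∧ a ≤ k then Q i ⟨a - 1, by omega⟩ else if a = 0 then 0 else 1

/-- The subpermutation density `t(τ, Q)` of `τ` in a weighted permutation `Q`. -/
def densW {m n : ℕ} (τ : Equiv.Perm (Fin m)) (Q : Fin n → Fin n → ℝ) : ℝ :=
  (n.choose m : ℝ)⁻¹ *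
    ∑ X ∈ Finset.univ.filter (fun X : Fin m → Fin n => StrictMono X),
      ∑ A ∈ Finset.univ.filter (fun A : Fin m → Fin (n + 1) => StrictMono A),
        ∏ i : Fin m, (Qext Q (X i) ((A (τ i) : ℕ) + 1) - Qext Q (X i) (A (τ i) : ℕ))

/-- The rectangular distance between two square matrices of order `n`
(in particular, weighted permutations): `a` and `b` range over `[n+1]`
(1-based) with `a < b`, and `S` over the subintervals of `[n]`. -/
def rectDistW {n : ℕ} (Q₁ Q₂ : Fin n → Fin n → ℝ) : ℝ :=
  sSup {d : ℝ | ∃ (lo hi : Fin n) (a b : ℕ), 1 ≤ a ∧ a < b ∧ b ≤ n + 1 ∧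
    d = (n : ℝ)⁻¹ * |∑ x ∈ Finset.Icc lo hi,
        ((Qext Q₁ x b - Qext Q₁ x a) - (Qext Q₂ x b - Qext Q₂ x a))|}

/-- The bipartite adjacency matrix `Q_σ` of the graph of a permutation:
`Q_σ(a,b) = 1` iff `σ(a) < b` (1-based). -/
def QofPerm {n : ℕ} (σ : Equiv.Perm (Fin n)) : Fin n → Fin n → ℝ :=
  fun i j => if (σ i : ℕ) < (j : ℕ) then 1 else 0

/-- The step function `Z_Q : [0,1]² → [0,1]` associated with a matrix `Q` of
order `n`: `Z_Q(x,y) = 0` if `y = 0`, `Z_Q(0,y) = ⌈ny⌉/n`, and otherwise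
`Z_Q(x,y) = Q(⌈nx⌉, ⌈ny⌉)` (1-based, with the conventions of `Qext`). -/
def stepW {n : ℕ} (Q : Fin n → Fin n → ℝ) : ℝ → ℝ → ℝ := fun x y =>
  if y = 0 then 0
  else if x = 0 then ((⌈(n : ℝ) * y⌉ : ℤ) : ℝ) / (n : ℝ)
  else if h : ∃ i : Fin n, ((i : ℕ) + 1 : ℤ) = ⌈(n : ℝ) * x⌉ then
    Qext Q h.choose (⌈(n : ℝ) * y⌉).toNat
  else 0

/-- The family of Lebesgue–Stieltjes measures of the step function `Z_Q`:
for `x` with `⌈nx⌉ = i ∈ [n]`, the cdf `Z_Q(x,·)` is a step function whose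
Lebesgue–Stieltjes measure places mass `Q(i,j+1) - Q(i,j)` at the point `j/n`
for `0 ≤ j ≤ n`. -/
def stepWMeasures {n : ℕ} (Q : Fin n → Fin n → ℝ) : ℝ → Measure ℝ := fun x =>
  if h : ∃ i : Fin n, ((i : ℕ) + 1 : ℤ) = ⌈(n : ℝ) * x⌉ then
    ∑ j : Fin (n + 1),
      ENNReal.ofReal (Qext Q h.choose ((j : ℕ) + 1) - Qext Q h.choose (j : ℕ)) •
        Measure.dirac ((j : ℝ) / (n : ℝ))
  else Measure.dirac 0

/-- The step function `Z_σ` of a permutation `σ`. -/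
def stepFun {n : ℕ} (σ : Equiv.Perm (Fin n)) : ℝ → ℝ → ℝ := stepW (QofPerm σ)

/-- The family of Lebesgue–Stieltjes measures of the step function `Z_σ`. -/
def stepMeasures {n : ℕ} (σ : Equiv.Perm (Fin n)) : ℝ → Measure ℝ :=
  stepWMeasures (QofPerm σ)

/-- The joint law of `((X₁,...,Xₙ), (a₁,...,aₙ))`, where the `Xᵢ` are i.i.d.
uniform on `[0,1]` and, conditionally on the `Xᵢ`, the `aᵢ` are independent
with `aᵢ` distributed according to `μ (Xᵢ)`. -/
def jointMeasure (μ : ℝ → Measure ℝ) (n : ℕ) : Measure ((Fin n → ℝ) × (Fin n → ℝ)) :=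
  (Measure.pi fun _ : Fin n => volume.restrict (Set.Icc (0:ℝ) 1)).bind fun X =>
    (Measure.pi fun i => μ (X i)).map fun a => (X, a)

/-- The (1-based) rank of `v i` among `v 1, ..., v n`. -/
def rankOf {n : ℕ} (v : Fin n → ℝ) (i : Fin n) : ℕ :=
  (Finset.univ.filter fun j => v j ≤ v i).card

/-- `π` is the permutation `S ∘ R⁻¹` determined by the sample
`ω = ((X₁,...,Xₙ), (a₁,...,aₙ))`, where `R` and `S` are the rank functions
of the `Xᵢ` and the `aᵢ`. -/
def IsSamplePerm {n : ℕ} (ω : (Fin n → ℝ) × (Fin n → ℝ)) (π : Equiv.Perm (Fin n)) : Prop :=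
  ∀ i p q : Fin n, rankOf ω.1 i = (p : ℕ) + 1 → rankOf ω.2 i = (q : ℕ) + 1 → π p = q

/-- The `Z`-random permutation determined by the sample `ω`; it is well defined
(the witness is unique) off a null set. -/
def samplePerm {n : ℕ} (ω : (Fin n → ℝ) × (Fin n → ℝ)) : Equiv.Perm (Fin n) :=
  if h : ∃! π : Equiv.Perm (Fin n), IsSamplePerm ω π then h.choose else 1

/-- The subinterval `{lo+1, ..., hi}` of `[n]` (as a finset of 0-based indices
`x` with `lo ≤ x < hi`). -/
def intervalFin (n : ℕ) (lo hi : ℕ) : Finset (Fin n) :=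
  Finset.univ.filter fun x => lo ≤ (x : ℕ) ∧ (x : ℕ) < hi

/-- `c : Fin (k+1) → ℕ` is the sequence of cut points of an equitable
`k`-partition of `[n]` into consecutive intervals `C_i = {c i + 1, ..., c (i+1)}`. -/
def IsEquipartition {k : ℕ} (n : ℕ) (c : Fin (k + 1) → ℕ) : Prop :=
  Monotone c ∧ c 0 = 0 ∧ c (Fin.last k) = n ∧
    ∀ i j : Fin k, ((intervalFin n (c i.castSucc) (c i.succ)).card : ℤ) -
      ((intervalFin n (c j.castSucc) (c j.succ)).card : ℤ) ≤ 1

/-- The number of edges of the graph `G_σ` between `A` and `B`: pairs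
`(a,b) ∈ A × B` with `σ(a) < b` (1-based). -/
def edgeCount {n : ℕ} (σ : Equiv.Perm (Fin n)) (A B : Finset (Fin n)) : ℕ :=
  ((A ×ˢ B).filter fun p => (σ p.1 : ℕ) < (p.2 : ℕ)).card

/-- The partition matrix `Q_{σ,P}` of `σ` induced by the partition with cut
points `c`. -/
def partMatrix {n k : ℕ} (σ : Equiv.Perm (Fin n)) (c : Fin (k + 1) → ℕ) :
    Fin k → Fin k → ℝ := fun u w =>
  (edgeCount σ (intervalFin n (c u.castSucc) (c u.succ))
      (intervalFin n (c w.castSucc) (c w.succ)) : ℝ) /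
    (((intervalFin n (c u.castSucc) (c u.succ)).card : ℝ) *
      ((intervalFin n (c w.castSucc) (c w.succ)).card : ℝ))

/-- The blow-up matrix `K(P,Q) : [n]² → [0,1]` of the matrix `Q : [k]² → [0,1]`
with respect to the partition with cut points `c`. -/
def blowup {n k : ℕ} (c : Fin (k + 1) → ℕ) (Q : Fin k → Fin k → ℝ) :
    Fin n → Fin n → ℝ := fun x y =>
  if hx : ∃ i : Fin k, c i.castSucc ≤ (x : ℕ) ∧ (x : ℕ) < c i.succ then
    if hy : ∃ j : Fin k, c j.castSucc ≤ (y : ℕ) ∧ (y : ℕ) < c j.succ then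
      Q hx.choose hy.choose
    else 0
  else 0

/-- The right limit `lim_{α' → α⁺} F(α')` of a (monotone) cdf `F` on `[0,1]`,
with the convention that the limit at `α = 1` is `1`. -/
def cdfRightLim (F : ℝ → ℝ) (α : ℝ) : ℝ :=
  if α = 1 then 1 else sInf (F '' Set.Ioc α 1)

/-- The cdf `F` is discontinuous at `α`: `lim_{α' → α⁺} F(α') > F(α)`. -/
def cdfDiscontAt (F : ℝ → ℝ) (α : ℝ) : Prop :=
  F α < cdfRightLim F α
section AuxDSFA

variable {n m : ℕ}

/-- The weight `w(i,j) = Q(i,j+1) - Q(i,j)` (1-based extended). -/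
def wgt (Q : Fin n → Fin n → ℝ) (i : Fin n) (j : Fin (n + 1)) : ℝ :=
  Qext Q i ((j : ℕ) + 1) - Qext Q i (j : ℕ)

lemma Qext_zero (Q : Fin n → Fin n → ℝ) (i : Fin n) : Qext Q i 0 = 0 := by
  simp [Qext]

lemma Qext_top (Q : Fin n → Fin n → ℝ) (i : Fin n) {a : ℕ} (ha : n < a) :
    Qext Q i a = 1 := by
  have h1 : ¬(1 ≤ a ∧ a ≤ n) := by omega
  have h2 : a ≠ 0 := by omega
  simp [Qext, h1, h2]

lemma wgt_nonneg {Q : Fin n → Fin n → ℝ} (hQ : WeightedPerm Q) (i : Fin n)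
    (j : Fin (n + 1)) : 0 ≤ wgt Q i j := by
  have hn : 0 < n := i.pos
  obtain ⟨hQ01, hQmono, -⟩ := hQ
  unfold wgt Qext
  rcases Nat.eq_zero_or_pos (j : ℕ) with h0 | h0
  · rw [h0]
    have h1 : (1 ≤ 1 ∧ 1 ≤ n) := ⟨le_refl 1, hn⟩
    have h2 : ¬(1 ≤ 0 ∧ 0 ≤ n) := by omega
    rw [dif_pos h1, dif_neg h2, if_pos rfl]
    simpa using (hQ01 i ⟨0, by omega⟩).1
  rcases lt_or_ge (j : ℕ) n with hjn | hjn
  · have h1 : 1 ≤ (j : ℕ) + 1 ∧ (j : ℕ) + 1 ≤ n := ⟨by omega, by omega⟩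
    have h2 : 1 ≤ (j : ℕ) ∧ (j : ℕ) ≤ n := ⟨h0, le_of_lt hjn⟩
    rw [dif_pos h1, dif_pos h2]
    have := hQmono i (a := ⟨(j : ℕ) - 1, by omega⟩) (b := ⟨(j : ℕ) + 1 - 1, by omega⟩)
      (by simp [Fin.le_def])
    simpa using this
  · have hj : (j : ℕ) = n := le_antisymm (by omega) hjn
    have h1 : ¬(1 ≤ (j : ℕ) + 1 ∧ (j : ℕ) + 1 ≤ n) := by omega
    have h2 : 1 ≤ (j : ℕ) ∧ (j : ℕ) ≤ n := ⟨by omega, by omega⟩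
    have h3 : (j : ℕ) + 1 ≠ 0 := by omega
    rw [dif_neg h1, dif_pos h2, if_neg h3]
    simpa using sub_nonneg.2 (hQ01 i ⟨(j : ℕ) - 1, by omega⟩).2

lemma sum_wgt (Q : Fin n → Fin n → ℝ) (i : Fin n) : ∑ j, wgt Q i j = 1 := by
  have hn : 0 < n := i.pos
  have : ∑ j : Fin (n + 1), wgt Q i j
      = ∑ j ∈ Finset.range (n + 1), (Qext Q i (j + 1) - Qext Q i j) := by
    rw [Finset.sum_range fun j => Qext Q i (j + 1) - Qext Q i j]
    rfl
  rw [this, Finset.sum_range_sub (fun j => Qext Q i j)]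
  rw [Qext_zero, Qext_top Q i (by omega : n < n + 1)]
  ring

/-- The discrete measure with mass `w(i,j)` at `j/n`. -/
def nuA (Q : Fin n → Fin n → ℝ) (i : Fin n) : Measure ℝ :=
  ∑ j : Fin (n + 1), ENNReal.ofReal (wgt Q i j) • Measure.dirac ((j : ℝ) / (n : ℝ))

lemma nuA_apply (Q : Fin n → Fin n → ℝ) (i : Fin n) {s : Set ℝ} (hs : MeasurableSet s) :
    nuA Q i s = ∑ j : Fin (n + 1),
      ENNReal.ofReal (wgt Q i j) * s.indicator 1 ((j : ℝ) / (n : ℝ)) := by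
  rw [nuA, Measure.finset_sum_apply]
  simp_rw [Measure.smul_apply, Measure.dirac_apply' _ hs, smul_eq_mul]

instance nuA.instFinite (Q : Fin n → Fin n → ℝ) (i : Fin n) :
    IsFiniteMeasure (nuA Q i) := by
  refine ⟨?_⟩
  rw [nuA_apply Q i MeasurableSet.univ]
  simp only [Set.indicator_univ, Pi.one_apply, mul_one]
  exact ENNReal.sum_lt_top.2 fun j _ => ENNReal.ofReal_lt_top

lemma nuA_univ {Q : Fin n → Fin n → ℝ} (hQ : WeightedPerm Q) (i : Fin n) :
    nuA Q i Set.univ = ENNReal.ofReal 1 := by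
  rw [nuA_apply Q i MeasurableSet.univ]
  simp only [Set.indicator_univ, Pi.one_apply, mul_one]
  rw [← ENNReal.ofReal_sum_of_nonneg]
  · rw [sum_wgt Q i]
  · exact fun j _ => wgt_nonneg hQ i j

lemma measurable_incSimplex : MeasurableSet (incSimplex m) := by
  have h1 : {y : Fin m → ℝ | StrictMono y} =
      ⋂ (i : Fin m), ⋂ (j : Fin m), ⋂ (_ : i < j), {y : Fin m → ℝ | y i < y j} := by
    ext y
    simp only [Set.mem_setOf_eq, Set.mem_iInter]
    exact ⟨fun h i j hij => h hij, fun h a b hab => h a b hab⟩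
  have h2 : incSimplex m = {y : Fin m → ℝ | StrictMono y} ∩
      ⋂ i : Fin m, (fun y : Fin m → ℝ => y i) ⁻¹' Set.Icc 0 1 := by
    ext y
    simp [incSimplex, Set.mem_iInter]
  rw [h2, h1]
  refine MeasurableSet.inter ?_ ?_
  · exact MeasurableSet.iInter fun i => MeasurableSet.iInter fun j =>
      MeasurableSet.iInter fun _ =>
        measurableSet_lt (measurable_pi_apply i) (measurable_pi_apply j)
  · exact MeasurableSet.iInter fun i => (measurable_pi_apply i) measurableSet_Icc

lemma pi_nuA (Q : Fin n → Fin n → ℝ) (k : Fin m → Fin n) :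
    Measure.pi (fun i : Fin m => nuA Q (k i)) =
      ∑ A : Fin m → Fin (n + 1),
        (∏ i, ENNReal.ofReal (wgt Q (k i) (A i))) •
          Measure.dirac (fun i => (A i : ℝ) / (n : ℝ)) := by
  refine Measure.pi_eq fun s hs => ?_
  rw [Measure.finset_sum_apply]
  simp_rw [Measure.smul_apply, Measure.dirac_apply' _ (MeasurableSet.univ_pi hs),
    smul_eq_mul]
  have hmem : ∀ A : Fin m → Fin (n + 1),
      (Set.univ.pi s).indicator (1 : (Fin m → ℝ) → ENNReal) (fun i => (A i : ℝ) / (n : ℝ))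
        = ∏ i, (s i).indicator 1 ((A i : ℝ) / (n : ℝ)) := by
    intro A
    by_cases h : (fun i => (A i : ℝ) / (n : ℝ)) ∈ Set.univ.pi s
    · rw [Set.indicator_of_mem h]
      rw [Set.mem_univ_pi] at h
      rw [Finset.prod_congr rfl fun i _ => Set.indicator_of_mem (h i) 1]
      simp
    · rw [Set.indicator_of_notMem h]
      rw [Set.mem_univ_pi] at h
      push_neg at h
      obtain ⟨i, hi⟩ := h
      symm
      apply Finset.prod_eq_zero (Finset.mem_univ i)
      simp [Set.indicator_of_notMem hi]
  simp_rw [hmem]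
  have hprod : ∀ A : Fin m → Fin (n + 1),
      (∏ i, ENNReal.ofReal (wgt Q (k i) (A i))) *
        ∏ i, (s i).indicator 1 ((A i : ℝ) / (n : ℝ))
      = ∏ i, (ENNReal.ofReal (wgt Q (k i) (A i)) *
          (s i).indicator 1 ((A i : ℝ) / (n : ℝ))) := by
    intro A
    rw [← Finset.prod_mul_distrib]
  simp_rw [hprod]
  have hps := Finset.prod_univ_sum (fun _ : Fin m => (Finset.univ : Finset (Fin (n + 1))))
    (fun i a => ENNReal.ofReal (wgt Q (k i) a) * (s i).indicator 1 ((a : ℝ) / (n : ℝ)))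
  rw [Fintype.piFinset_univ] at hps
  rw [← hps]
  exact Finset.prod_congr rfl fun i _ => (nuA_apply Q (k i) (hs i)).symm

/-- The inner sum `G(k)`. -/
def GFn (Q : Fin n → Fin n → ℝ) (τ : Equiv.Perm (Fin m)) (k : Fin m → Fin n) : ℝ :=
  ∑ A ∈ Finset.univ.filter (fun A : Fin m → Fin (n + 1) => StrictMono A),
    ∏ i, wgt Q (k (τ.symm i)) (A i)

lemma GFn_nonneg {Q : Fin n → Fin n → ℝ} (hQ : WeightedPerm Q) (τ : Equiv.Perm (Fin m))
    (k : Fin m → Fin n) : 0 ≤ GFn Q τ k :=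
  Finset.sum_nonneg fun A _ => Finset.prod_nonneg fun i _ => wgt_nonneg hQ _ _

lemma GFn_le_one {Q : Fin n → Fin n → ℝ} (hQ : WeightedPerm Q) (τ : Equiv.Perm (Fin m))
    (k : Fin m → Fin n) : GFn Q τ k ≤ 1 := by
  have h1 : GFn Q τ k ≤ ∑ A : Fin m → Fin (n + 1), ∏ i, wgt Q (k (τ.symm i)) (A i) :=
    Finset.sum_le_sum_of_subset_of_nonneg (Finset.filter_subset _ _)
      (fun A _ _ => Finset.prod_nonneg fun i _ => wgt_nonneg hQ _ _)
  refine le_trans h1 ?_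
  have hps := Finset.prod_univ_sum (fun _ : Fin m => (Finset.univ : Finset (Fin (n + 1))))
    (fun i a => wgt Q (k (τ.symm i)) a)
  rw [Fintype.piFinset_univ] at hps
  rw [← hps]
  rw [Finset.prod_congr rfl fun i (_ : i ∈ Finset.univ) => sum_wgt Q (k (τ.symm i))]
  simp

lemma cast_div_lt_iff {n : ℕ} (hn : 0 < n) (a b : Fin (n + 1)) :
    (a : ℝ) / (n : ℝ) < (b : ℝ) / (n : ℝ) ↔ a < b := by
  rw [div_lt_div_iff_of_pos_right (by exact_mod_cast hn)]
  exact_mod_cast Iff.rfl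

lemma pi_nuA_simplex {Q : Fin n → Fin n → ℝ} (hQ : WeightedPerm Q) (hn : 0 < n)
    (τ : Equiv.Perm (Fin m)) (k : Fin m → Fin n) :
    ((Measure.pi fun i : Fin m => nuA Q (k (τ.symm i))) (incSimplex m)).toReal
      = GFn Q τ k := by
  rw [pi_nuA Q (fun i => k (τ.symm i))]
  rw [Measure.finset_sum_apply]
  simp_rw [Measure.smul_apply, Measure.dirac_apply' _ measurable_incSimplex, smul_eq_mul]
  have key : ∀ A : Fin m → Fin (n + 1),
      (incSimplex m).indicator (1 : (Fin m → ℝ) → ENNReal) (fun i => (A i : ℝ) / (n : ℝ))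
        = if StrictMono A then 1 else 0 := by
    intro A
    by_cases hA : StrictMono A
    · rw [if_pos hA]
      have hmem : (fun i => (A i : ℝ) / (n : ℝ)) ∈ incSimplex m := by
        simp only [incSimplex, Set.mem_setOf_eq]
        refine ⟨fun a b hab => (cast_div_lt_iff hn (A a) (A b)).2 (hA hab), fun i => ⟨?_, ?_⟩⟩
        · positivity
        · rw [div_le_one (by exact_mod_cast hn)]
          exact_mod_cast Nat.lt_succ_iff.1 (A i).isLt
      rw [Set.indicator_of_mem hmem]
      rfl
    · rw [if_neg hA, Set.indicator_of_notMem]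
      intro hmem
      simp only [incSimplex, Set.mem_setOf_eq] at hmem
      exact hA fun a b hab => (cast_div_lt_iff hn (A a) (A b)).1 (hmem.1 hab)
  simp_rw [key, mul_ite, mul_one, mul_zero]
  rw [← Finset.sum_filter]
  have hterm : ∀ A ∈ Finset.univ.filter (fun A : Fin m → Fin (n + 1) => StrictMono A),
      ∏ i, ENNReal.ofReal (wgt Q (k (τ.symm i)) (A i))
        = ENNReal.ofReal (∏ i, wgt Q (k (τ.symm i)) (A i)) := by
    intro A _
    exact (ENNReal.ofReal_prod_of_nonneg fun i _ => wgt_nonneg hQ _ _).symm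
  rw [Finset.sum_congr rfl hterm, ← ENNReal.ofReal_sum_of_nonneg
    (fun A _ => Finset.prod_nonneg fun i _ => wgt_nonneg hQ _ _)]
  rw [ENNReal.toReal_ofReal
    (Finset.sum_nonneg fun A _ => Finset.prod_nonneg fun i _ => wgt_nonneg hQ _ _)]
  rfl

/-- The half-open cube indexed by `k`. -/
def cellA (n : ℕ) {m : ℕ} (k : Fin m → Fin n) : Set (Fin m → ℝ) :=
  Set.univ.pi fun i => Set.Ioc ((k i : ℝ) / (n : ℝ)) (((k i : ℝ) + 1) / (n : ℝ))

lemma stepWMeasures_eq_nuA (Q : Fin n → Fin n → ℝ) {x : ℝ} {j : Fin n}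
    (hx : x ∈ Set.Ioc ((j : ℝ) / (n : ℝ)) (((j : ℝ) + 1) / (n : ℝ))) :
    stepWMeasures Q x = nuA Q j := by
  have hn : 0 < n := j.pos
  have hnR : (0 : ℝ) < (n : ℝ) := by exact_mod_cast hn
  have h1 : (j : ℝ) < (n : ℝ) * x := by
    have := (div_lt_iff₀ hnR).1 hx.1
    linarith
  have h2 : (n : ℝ) * x ≤ (j : ℝ) + 1 := by
    have := (le_div_iff₀ hnR).1 hx.2
    linarith
  have hceil : ⌈(n : ℝ) * x⌉ = ((j : ℕ) : ℤ) + 1 := by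
    rw [Int.ceil_eq_iff]
    constructor
    · push_cast
      linarith
    · push_cast
      linarith
  have h : ∃ i : Fin n, ((i : ℕ) + 1 : ℤ) = ⌈(n : ℝ) * x⌉ := ⟨j, by rw [hceil]⟩
  rw [stepWMeasures, dif_pos h]
  have hch : h.choose = j := by
    have hspec : ((h.choose : ℕ) : ℤ) + 1 = ((j : ℕ) : ℤ) + 1 := h.choose_spec.trans hceil
    have : (h.choose : ℕ) = (j : ℕ) := by omega
    exact Fin.ext this
  rw [hch]
  rfl

lemma coreFn_on_cell {Q : Fin n → Fin n → ℝ} (hQ : WeightedPerm Q) (hn : 0 < n)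
    (τ : Equiv.Perm (Fin m)) (k : Fin m → Fin n) {x : Fin m → ℝ} (hx : x ∈ cellA n k) :
    coreFn τ (stepWMeasures Q) x = GFn Q τ k := by
  rw [coreFn]
  have hfun : (fun i => stepWMeasures Q (x (τ.symm i))) = fun i => nuA Q (k (τ.symm i)) := by
    funext i
    exact stepWMeasures_eq_nuA Q (hx (τ.symm i) (Set.mem_univ _))
  rw [hfun]
  exact pi_nuA_simplex hQ hn τ k

lemma measurable_cellA (k : Fin m → Fin n) : MeasurableSet (cellA n k) :=
  MeasurableSet.univ_pi fun _ => measurableSet_Ioc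

lemma volume_cellA (hn : 0 < n) (k : Fin m → Fin n) :
    volume (cellA n k) = ENNReal.ofReal ((n : ℝ)⁻¹) ^ m := by
  rw [cellA, volume_pi_pi]
  have : ∀ i : Fin m,
      volume (Set.Ioc ((k i : ℝ) / (n : ℝ)) (((k i : ℝ) + 1) / (n : ℝ)))
        = ENNReal.ofReal ((n : ℝ)⁻¹) := by
    intro i
    rw [Real.volume_Ioc]
    congr 1
    field_simp
    ring
  rw [Finset.prod_congr rfl fun i _ => this i]
  simp

lemma cellA_disjoint (hn : 0 < n) : Pairwise (Function.onFun Disjoint (cellA n (m := m))) := by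
  intro k k' hkk'
  rw [Function.onFun, Set.disjoint_left]
  intro x hx hx'
  have hne : ∃ i, k i ≠ k' i := by
    by_contra hc
    push_neg at hc
    exact hkk' (funext hc)
  obtain ⟨i, hi⟩ := hne
  have h1 := hx i (Set.mem_univ _)
  have h2 := hx' i (Set.mem_univ _)
  have hnR : (0 : ℝ) < (n : ℝ) := by exact_mod_cast hn
  rcases lt_or_gt_of_ne hi with h | h
  · have hcast : ((k i : ℕ) : ℝ) + 1 ≤ ((k' i : ℕ) : ℝ) := by exact_mod_cast h
    have hdiv : (((k i : ℕ) : ℝ) + 1) / (n : ℝ) ≤ ((k' i : ℕ) : ℝ) / (n : ℝ) := by gcongr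
    linarith [h1.2, h2.1]
  · have hcast : ((k' i : ℕ) : ℝ) + 1 ≤ ((k i : ℕ) : ℝ) := by exact_mod_cast h
    have hdiv : (((k' i : ℕ) : ℝ) + 1) / (n : ℝ) ≤ ((k i : ℕ) : ℝ) / (n : ℝ) := by gcongr
    linarith [h2.2, h1.1]

lemma cellA_subset_simplex (hn : 0 < n) {k : Fin m → Fin n} (hk : StrictMono k) :
    cellA n k ⊆ incSimplex m := by
  intro x hx
  have hnR : (0 : ℝ) < (n : ℝ) := by exact_mod_cast hn
  constructor
  · intro a b hab
    have h1 := hx a (Set.mem_univ _)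
    have h2 := hx b (Set.mem_univ _)
    have hcast : ((k a : ℕ) : ℝ) + 1 ≤ ((k b : ℕ) : ℝ) := by exact_mod_cast hk hab
    calc x a ≤ (((k a : ℕ) : ℝ) + 1) / (n : ℝ) := h1.2
      _ ≤ ((k b : ℕ) : ℝ) / (n : ℝ) := by gcongr
      _ < x b := h2.1
  · intro i
    have h1 := hx i (Set.mem_univ _)
    constructor
    · exact le_of_lt (lt_of_le_of_lt (by positivity) h1.1)
    · refine h1.2.trans ?_
      rw [div_le_one hnR]
      have : (k i : ℕ) + 1 ≤ n := (k i).isLt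
      exact_mod_cast this

lemma simplex_inter_cellA_empty (hn : 0 < n) {k : Fin m → Fin n} (hk : ¬ StrictMono k)
    (htie : ¬ ∃ p : Fin m × Fin m, p.1 < p.2 ∧ k p.1 = k p.2) :
    incSimplex m ∩ cellA n k = ∅ := by
  rw [Set.eq_empty_iff_forall_notMem]
  rintro x ⟨hxs, hxc⟩
  push_neg at htie
  apply hk
  intro a b hab
  have h1 := hxc a (Set.mem_univ _)
  have h2 := hxc b (Set.mem_univ _)
  have hxab : x a < x b := hxs.1 hab
  rcases lt_trichotomy (k a) (k b) with h | h | h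
  · exact h
  · exact absurd h (htie (a, b) hab)
  · exfalso
    have hcast : ((k b : ℕ) : ℝ) + 1 ≤ ((k a : ℕ) : ℝ) := by exact_mod_cast h
    have hnR : (0 : ℝ) < (n : ℝ) := by exact_mod_cast hn
    have hdiv : (((k b : ℕ) : ℝ) + 1) / (n : ℝ) ≤ ((k a : ℕ) : ℝ) / (n : ℝ) := by gcongr
    linarith [h1.1, h2.2]

lemma simplex_cover (hn : 0 < n) :
    incSimplex m \ (⋃ k : Fin m → Fin n, cellA n k) ⊆
      ⋃ i : Fin m, {x : Fin m → ℝ | x i = 0} := by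
  rintro x ⟨hxs, hxu⟩
  by_contra hc
  simp only [Set.mem_iUnion, Set.mem_setOf_eq] at hc
  push_neg at hc
  apply hxu
  have hnR : (0 : ℝ) < (n : ℝ) := by exact_mod_cast hn
  have hx01 : ∀ i, 0 < x i ∧ x i ≤ 1 := by
    intro i
    have := hxs.2 i
    exact ⟨lt_of_le_of_ne this.1 (Ne.symm (hc i)), this.2⟩
  have hk : ∀ i : Fin m, ∃ j : Fin n, x i ∈ Set.Ioc ((j : ℝ) / (n : ℝ)) (((j : ℝ) + 1) / (n : ℝ)) := by
    intro i
    obtain ⟨hpos, hle⟩ := hx01 i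
    have hceil1 : 1 ≤ ⌈(n : ℝ) * x i⌉ := by
      have : (0 : ℝ) < (n : ℝ) * x i := by positivity
      exact Int.ceil_pos.2 this
    have hceiln : ⌈(n : ℝ) * x i⌉ ≤ (n : ℤ) := by
      apply Int.ceil_le.2
      push_cast
      nlinarith
    refine ⟨⟨(⌈(n : ℝ) * x i⌉ - 1).toNat, by omega⟩, ?_, ?_⟩
    · rw [div_lt_iff₀ hnR]
      have h := Int.ceil_lt_add_one ((n : ℝ) * x i)
      have hcast : (((⌈(n : ℝ) * x i⌉ - 1).toNat : ℕ) : ℝ) = (⌈(n : ℝ) * x i⌉ : ℝ) - 1 := by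
        have h0 : (0 : ℤ) ≤ ⌈(n : ℝ) * x i⌉ - 1 := by omega
        have h1 : ((((⌈(n : ℝ) * x i⌉ - 1).toNat : ℕ) : ℤ) : ℝ)
            = ((⌈(n : ℝ) * x i⌉ - 1 : ℤ) : ℝ) := by rw [Int.toNat_of_nonneg h0]
        push_cast at h1
        linarith
      rw [hcast]
      nlinarith [Int.ceil_lt_add_one ((n : ℝ) * x i)]
    · rw [le_div_iff₀ hnR]
      have h := Int.le_ceil ((n : ℝ) * x i)
      have hcast : (((⌈(n : ℝ) * x i⌉ - 1).toNat : ℕ) : ℝ) = (⌈(n : ℝ) * x i⌉ : ℝ) - 1 := by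
        have h0 : (0 : ℤ) ≤ ⌈(n : ℝ) * x i⌉ - 1 := by omega
        have h1 : ((((⌈(n : ℝ) * x i⌉ - 1).toNat : ℕ) : ℤ) : ℝ)
            = ((⌈(n : ℝ) * x i⌉ - 1 : ℤ) : ℝ) := by rw [Int.toNat_of_nonneg h0]
        push_cast at h1
        linarith
      rw [hcast]
      nlinarith
  choose kk hkk using hk
  exact Set.mem_iUnion.2 ⟨kk, fun i _ => hkk i⟩

lemma integral_core {Q : Fin n → Fin n → ℝ} (hQ : WeightedPerm Q) (hn : 0 < n)
    (τ : Equiv.Perm (Fin m)) :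
    ∫ x in incSimplex m, coreFn τ (stepWMeasures Q) x
      = ∑ k : Fin m → Fin n, GFn Q τ k * (volume (incSimplex m ∩ cellA n k)).toReal := by
  have hae : incSimplex m =ᵐ[volume]
      ((incSimplex m ∩ (⋃ k : Fin m → Fin n, cellA n k) : Set (Fin m → ℝ))) := by
    rw [MeasureTheory.ae_eq_set]
    constructor
    · refine measure_mono_null (t := ⋃ i : Fin m, {x : Fin m → ℝ | x i = 0}) ?_ ?_
      · exact fun x hx => simplex_cover hn ⟨hx.1, fun hu => hx.2 ⟨hx.1, hu⟩⟩
      · refine measure_iUnion_null fun i => ?_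
        rw [MeasureTheory.volume_pi]
        exact Measure.pi_hyperplane _ i 0
    · have hde : ((incSimplex m ∩ (⋃ k : Fin m → Fin n, cellA n k)) \ incSimplex m) = ∅ :=
        Set.diff_eq_empty.2 Set.inter_subset_left
      rw [hde]
      exact measure_empty
  rw [setIntegral_congr_set hae, Set.inter_iUnion]
  have hmeas : ∀ k : Fin m → Fin n, MeasurableSet (incSimplex m ∩ cellA n k) :=
    fun k => measurable_incSimplex.inter (measurable_cellA k)
  have hdisj : Pairwise (Function.onFun Disjoint
      (fun k : Fin m → Fin n => incSimplex m ∩ cellA n k)) := by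
    intro k k' hkk'
    exact Set.disjoint_of_subset Set.inter_subset_right Set.inter_subset_right
      (cellA_disjoint hn hkk')
  have hvol : ∀ k : Fin m → Fin n, volume (incSimplex m ∩ cellA n k) < ⊤ := by
    intro k
    refine lt_of_le_of_lt (measure_mono Set.inter_subset_right) ?_
    rw [volume_cellA hn]
    exact ENNReal.pow_lt_top ENNReal.ofReal_lt_top
  have hint : ∀ k : Fin m → Fin n, IntegrableOn (coreFn τ (stepWMeasures Q))
      (incSimplex m ∩ cellA n k) volume := by
    intro k
    have hconst : IntegrableOn (fun _ : Fin m → ℝ => GFn Q τ k)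
        (incSimplex m ∩ cellA n k) volume :=
      integrableOn_const (hvol k).ne
    exact hconst.congr_fun
      (fun x hx => (coreFn_on_cell hQ hn τ k hx.2).symm) (hmeas k)
  rw [integral_iUnion_fintype hmeas hdisj hint]
  refine Finset.sum_congr rfl fun k _ => ?_
  rw [setIntegral_congr_fun (hmeas k) (fun x hx => coreFn_on_cell hQ hn τ k hx.2)]
  rw [setIntegral_const]
  rw [smul_eq_mul, mul_comm]
  rfl

lemma card_eqpair_le {a b : Fin m} (hab : a ≠ b) :
    (Finset.univ.filter fun k : Fin m → Fin n => k a = k b).card ≤ n ^ (m - 1) := by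
  have hm1 : 0 < m := a.pos
  have hcard : Fintype.card ({i : Fin m // ¬ (i = b)} → Fin n) = n ^ (m - 1) := by
    rw [Fintype.card_fun, Fintype.card_fin]
    congr 1
    rw [Fintype.card_subtype_compl, Fintype.card_subtype_eq, Fintype.card_fin]
  have hinj : Set.InjOn (fun (k : Fin m → Fin n) (i : {i : Fin m // ¬ (i = b)}) => k i.1)
      ((Finset.univ.filter fun k : Fin m → Fin n => k a = k b) : Set (Fin m → Fin n)) := by
    intro k hk k' hk' heq
    simp only [Finset.coe_filter, Set.mem_setOf_eq] at hk hk'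
    funext i
    by_cases hib : i = b
    · subst hib
      have h1 := congrFun heq ⟨a, hab⟩
      simp only at h1
      rw [← hk.2, ← hk'.2]
      exact h1
    · exact congrFun heq ⟨i, hib⟩
  have h := Finset.card_le_card_of_injOn
    (t := (Finset.univ : Finset ({i : Fin m // ¬ (i = b)} → Fin n)))
    (fun (k : Fin m → Fin n) (i : {i : Fin m // ¬ (i = b)}) => k i.1)
    (fun k _ => Finset.mem_univ _) hinj
  rwa [Finset.card_univ, hcard] at h

lemma card_tie_le :
    ((Finset.univ.filter fun k : Fin m → Fin n =>
      ∃ p : Fin m × Fin m, p.1 < p.2 ∧ k p.1 = k p.2).card : ℝ)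
        ≤ (m * m : ℝ) * (n : ℝ) ^ (m - 1) := by
  have hsub : (Finset.univ.filter fun k : Fin m → Fin n =>
      ∃ p : Fin m × Fin m, p.1 < p.2 ∧ k p.1 = k p.2) ⊆
      (Finset.univ.filter fun p : Fin m × Fin m => p.1 < p.2).biUnion
        (fun p => Finset.univ.filter fun k : Fin m → Fin n => k p.1 = k p.2) := by
    intro k hk
    simp only [Finset.mem_filter, Finset.mem_univ, true_and] at hk
    obtain ⟨p, hp1, hp2⟩ := hk
    exact Finset.mem_biUnion.2 ⟨p, by simp [hp1], by simp [hp2]⟩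
  have h1 := Finset.card_le_card hsub
  have h2 := Finset.card_biUnion_le (s := Finset.univ.filter fun p : Fin m × Fin m => p.1 < p.2)
    (t := fun p => Finset.univ.filter fun k : Fin m → Fin n => k p.1 = k p.2)
  have h3 : ∑ p ∈ Finset.univ.filter (fun p : Fin m × Fin m => p.1 < p.2),
      (Finset.univ.filter fun k : Fin m → Fin n => k p.1 = k p.2).card
        ≤ (m * m) * n ^ (m - 1) := by
    refine le_trans (Finset.sum_le_sum (g := fun _ => n ^ (m - 1)) fun p hp =>
      card_eqpair_le (ne_of_lt (Finset.mem_filter.1 hp).2)) ?_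
    rw [Finset.sum_const, smul_eq_mul]
    have : (Finset.univ.filter fun p : Fin m × Fin m => p.1 < p.2).card ≤ m * m := by
      refine le_trans (Finset.card_le_card (Finset.filter_subset _ _)) ?_
      simp [Finset.card_univ]
    exact Nat.mul_le_mul_right _ this
  have := le_trans h1 (le_trans h2 h3)
  calc ((Finset.univ.filter fun k : Fin m → Fin n =>
      ∃ p : Fin m × Fin m, p.1 < p.2 ∧ k p.1 = k p.2).card : ℝ)
      ≤ ((m * m * n ^ (m - 1) : ℕ) : ℝ) := by exact_mod_cast this
    _ = (m * m : ℝ) * (n : ℝ) ^ (m - 1) := by push_cast; ring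

end AuxDSFA

/-- the density of `τ` in the step function `Z_Q` of a weighted
permutation `Q` approximates the density of `τ` in `Q`. -/
theorem density_step_function_approx {m n : ℕ} (Q : Fin n → Fin n → ℝ)
    (hQ : WeightedPerm Q) (τ : Equiv.Perm (Fin m)) (hm : 1 < m) (hmn : m < n) :
    (1 - (m : ℝ) / (n : ℝ)) ^ m * densW τ Q ≤ densL τ (stepWMeasures Q) ∧
      densL τ (stepWMeasures Q) ≤ densW τ Q + (Nat.factorial (m + 2) : ℝ) / (n : ℝ) := by
  have hm0 : 0 < m := by omega
  have hn : 0 < n := by omega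
  have hnR : (0 : ℝ) < (n : ℝ) := by exact_mod_cast hn
  set S : ℝ := ∑ X ∈ Finset.univ.filter (fun X : Fin m → Fin n => StrictMono X),
    GFn Q τ X with hS
  have hdensW : densW τ Q = ((n.choose m : ℝ))⁻¹ * S := by
    rw [densW, hS]
    congr 1
    refine Finset.sum_congr rfl fun X _ => ?_
    refine Finset.sum_congr rfl fun A _ => ?_
    have h := Equiv.prod_comp τ (fun i => wgt Q (X (τ.symm i)) (A i))
    simp only [Equiv.symm_apply_apply] at h
    exact h
  have hS_nonneg : 0 ≤ S := Finset.sum_nonneg fun X _ => GFn_nonneg hQ τ X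
  have hCpos : 0 < (n.choose m : ℝ) := by exact_mod_cast Nat.choose_pos (le_of_lt hmn)
  have hdensW_nonneg : 0 ≤ densW τ Q := by
    rw [hdensW]
    positivity
  have hSW : S = (n.choose m : ℝ) * densW τ Q := by
    rw [hdensW]
    field_simp
  have hL : densL τ (stepWMeasures Q) = (m.factorial : ℝ) *
      ∑ k : Fin m → Fin n, GFn Q τ k * (volume (incSimplex m ∩ cellA n k)).toReal := by
    rw [densL, integral_core hQ hn τ]
  have hsplit := Finset.sum_filter_add_sum_filter_not Finset.univ
    (fun k : Fin m → Fin n => StrictMono k)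
    (fun k => GFn Q τ k * (volume (incSimplex m ∩ cellA n k)).toReal)
  have hvolstrict : ∀ k : Fin m → Fin n, StrictMono k →
      (volume (incSimplex m ∩ cellA n k)).toReal = ((n : ℝ)⁻¹) ^ m := by
    intro k hk
    rw [Set.inter_eq_self_of_subset_right (cellA_subset_simplex hn hk), volume_cellA hn]
    rw [ENNReal.toReal_pow, ENNReal.toReal_ofReal (by positivity)]
  have hstrict : ∑ k ∈ Finset.univ.filter (fun k : Fin m → Fin n => StrictMono k),
      GFn Q τ k * (volume (incSimplex m ∩ cellA n k)).toReal = ((n : ℝ)⁻¹) ^ m * S := by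
    rw [hS, Finset.mul_sum]
    refine Finset.sum_congr rfl fun k hk => ?_
    rw [hvolstrict k (Finset.mem_filter.1 hk).2, mul_comm]
  set R : ℝ := ∑ k ∈ Finset.univ.filter (fun k : Fin m → Fin n => ¬ StrictMono k),
      GFn Q τ k * (volume (incSimplex m ∩ cellA n k)).toReal with hR
  have hvt_nonneg : ∀ k : Fin m → Fin n,
      0 ≤ (volume (incSimplex m ∩ cellA n k)).toReal := fun k => ENNReal.toReal_nonneg
  have hR_nonneg : 0 ≤ R :=
    Finset.sum_nonneg fun k _ => mul_nonneg (GFn_nonneg hQ τ k) (hvt_nonneg k)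
  have hvt_le : ∀ k : Fin m → Fin n,
      (volume (incSimplex m ∩ cellA n k)).toReal ≤ ((n : ℝ)⁻¹) ^ m := by
    intro k
    have h1 : volume (incSimplex m ∩ cellA n k) ≤ volume (cellA n k) :=
      measure_mono Set.inter_subset_right
    have h2 := ENNReal.toReal_mono
      (by rw [volume_cellA hn]; exact (ENNReal.pow_lt_top ENNReal.ofReal_lt_top).ne) h1
    rwa [volume_cellA hn, ENNReal.toReal_pow, ENNReal.toReal_ofReal (by positivity)] at h2
  have hR_le : R ≤ (m * m : ℝ) / (n : ℝ) := by
    have hterm : ∀ k ∈ Finset.univ.filter (fun k : Fin m → Fin n => ¬ StrictMono k),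
        GFn Q τ k * (volume (incSimplex m ∩ cellA n k)).toReal ≤
          (if ∃ p : Fin m × Fin m, p.1 < p.2 ∧ k p.1 = k p.2 then ((n : ℝ)⁻¹) ^ m else 0) := by
      intro k hk
      have hns := (Finset.mem_filter.1 hk).2
      by_cases htie : ∃ p : Fin m × Fin m, p.1 < p.2 ∧ k p.1 = k p.2
      · rw [if_pos htie]
        calc GFn Q τ k * (volume (incSimplex m ∩ cellA n k)).toReal
            ≤ 1 * ((n : ℝ)⁻¹) ^ m :=
              mul_le_mul (GFn_le_one hQ τ k) (hvt_le k) (hvt_nonneg k) zero_le_one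
          _ = ((n : ℝ)⁻¹) ^ m := one_mul _
      · rw [if_neg htie, simplex_inter_cellA_empty hn hns htie]
        simp
    refine le_trans (Finset.sum_le_sum hterm) ?_
    rw [← Finset.sum_filter, Finset.sum_const, nsmul_eq_mul]
    have hcard_le : (((Finset.univ.filter (fun k : Fin m → Fin n => ¬ StrictMono k)).filter
        (fun k => ∃ p : Fin m × Fin m, p.1 < p.2 ∧ k p.1 = k p.2)).card : ℝ) ≤
        ((Finset.univ.filter fun k : Fin m → Fin n =>
          ∃ p : Fin m × Fin m, p.1 < p.2 ∧ k p.1 = k p.2).card : ℝ) := by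
      have : ((Finset.univ.filter (fun k : Fin m → Fin n => ¬ StrictMono k)).filter
          (fun k => ∃ p : Fin m × Fin m, p.1 < p.2 ∧ k p.1 = k p.2)) ⊆
          (Finset.univ.filter fun k : Fin m → Fin n =>
            ∃ p : Fin m × Fin m, p.1 < p.2 ∧ k p.1 = k p.2) := by
        intro k hk
        simp only [Finset.mem_filter, Finset.mem_univ, true_and] at hk ⊢
        exact hk.2
      exact_mod_cast Finset.card_le_card this
    have hpow : ((n : ℝ)) ^ (m - 1) * ((n : ℝ)⁻¹) ^ m = (n : ℝ)⁻¹ := by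
      have hmm : m = (m - 1) + 1 := by omega
      have hx : (n : ℝ) ^ m = (n : ℝ) ^ (m - 1) * (n : ℝ) := by
        conv_lhs => rw [hmm]
        rw [pow_succ]
      rw [inv_pow, hx, mul_inv, ← mul_assoc,
        mul_inv_cancel₀ (pow_ne_zero _ (ne_of_gt hnR)), one_mul]
    calc (((Finset.univ.filter (fun k : Fin m → Fin n => ¬ StrictMono k)).filter
          (fun k => ∃ p : Fin m × Fin m, p.1 < p.2 ∧ k p.1 = k p.2)).card : ℝ) * ((n : ℝ)⁻¹) ^ m
        ≤ ((m * m : ℝ) * (n : ℝ) ^ (m - 1)) * ((n : ℝ)⁻¹) ^ m := by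
          apply mul_le_mul_of_nonneg_right _ (by positivity)
          exact le_trans hcard_le card_tie_le
      _ = (m * m : ℝ) * ((n : ℝ) ^ (m - 1) * ((n : ℝ)⁻¹) ^ m) := by ring
      _ = (m * m : ℝ) / (n : ℝ) := by rw [hpow]; ring
  have hform : densL τ (stepWMeasures Q)
      = (m.factorial : ℝ) * (((n : ℝ)⁻¹) ^ m * S + R) := by
    rw [hL, ← hsplit, hstrict]
  have hdesc : ((n.descFactorial m : ℕ) : ℝ) = (m.factorial : ℝ) * (n.choose m : ℝ) := by
    exact_mod_cast Nat.descFactorial_eq_factorial_mul_choose n m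
  have hnat_lb : (n - m) ^ m ≤ n.descFactorial m := by
    rw [Nat.descFactorial_eq_prod_range]
    calc (n - m) ^ m = ∏ _i ∈ Finset.range m, (n - m) := by
          rw [Finset.prod_const, Finset.card_range]
      _ ≤ ∏ i ∈ Finset.range m, (n - i) := by
          refine Finset.prod_le_prod' fun i hi => ?_
          have := Finset.mem_range.1 hi
          omega
  have hcoef_lb : (1 - (m : ℝ) / (n : ℝ)) ^ m
      ≤ (m.factorial : ℝ) * ((n : ℝ)⁻¹) ^ m * (n.choose m : ℝ) := by
    have h1 : (1 - (m : ℝ) / (n : ℝ)) = ((n - m : ℕ) : ℝ) / (n : ℝ) := by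
      rw [Nat.cast_sub hmn.le]
      field_simp
    have h2 : (m.factorial : ℝ) * ((n : ℝ)⁻¹) ^ m * (n.choose m : ℝ)
        = ((n.descFactorial m : ℕ) : ℝ) * ((n : ℝ)⁻¹) ^ m := by
      rw [hdesc]
      ring
    rw [h1, h2, div_pow, div_eq_mul_inv, ← inv_pow]
    apply mul_le_mul_of_nonneg_right _ (by positivity)
    exact_mod_cast hnat_lb
  have hcoef_ub : (m.factorial : ℝ) * ((n : ℝ)⁻¹) ^ m * (n.choose m : ℝ) ≤ 1 := by
    have h2 : (m.factorial : ℝ) * ((n : ℝ)⁻¹) ^ m * (n.choose m : ℝ)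
        = ((n.descFactorial m : ℕ) : ℝ) * ((n : ℝ)⁻¹) ^ m := by
      rw [hdesc]
      ring
    rw [h2]
    have h3 : ((n.descFactorial m : ℕ) : ℝ) ≤ (n : ℝ) ^ m := by
      exact_mod_cast Nat.descFactorial_le_pow n m
    calc ((n.descFactorial m : ℕ) : ℝ) * ((n : ℝ)⁻¹) ^ m
        ≤ (n : ℝ) ^ m * ((n : ℝ)⁻¹) ^ m := by
          apply mul_le_mul_of_nonneg_right h3 (by positivity)
      _ = 1 := by
          rw [← mul_pow, mul_inv_cancel₀ (ne_of_gt hnR), one_pow]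
  have hfacpos : (0 : ℝ) < (m.factorial : ℝ) := by exact_mod_cast m.factorial_pos
  constructor
  · rw [hform]
    have h1 : (1 - (m : ℝ) / (n : ℝ)) ^ m * densW τ Q
        ≤ ((m.factorial : ℝ) * ((n : ℝ)⁻¹) ^ m * (n.choose m : ℝ)) * densW τ Q :=
      mul_le_mul_of_nonneg_right hcoef_lb hdensW_nonneg
    have h2 : ((m.factorial : ℝ) * ((n : ℝ)⁻¹) ^ m * (n.choose m : ℝ)) * densW τ Q
        = (m.factorial : ℝ) * (((n : ℝ)⁻¹) ^ m * S) := by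
      rw [hSW]
      ring
    nlinarith
  · rw [hform]
    have h1 : (m.factorial : ℝ) * (((n : ℝ)⁻¹) ^ m * S + R)
        = ((m.factorial : ℝ) * ((n : ℝ)⁻¹) ^ m * (n.choose m : ℝ)) * densW τ Q
          + (m.factorial : ℝ) * R := by
      rw [hSW]
      ring
    rw [h1]
    have h2 : ((m.factorial : ℝ) * ((n : ℝ)⁻¹) ^ m * (n.choose m : ℝ)) * densW τ Q
        ≤ densW τ Q := by
      have := mul_le_mul_of_nonneg_right hcoef_ub hdensW_nonneg
      simpa using this
    have hfac : (m.factorial : ℝ) * (m * m : ℝ) ≤ ((m + 2).factorial : ℝ) := by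
      have hnatf : m.factorial * (m * m) ≤ (m + 2).factorial := by
        have h4 : (m + 2).factorial = (m + 2) * ((m + 1) * m.factorial) := by
          rw [Nat.factorial_succ, Nat.factorial_succ]
        have h5 : m * m ≤ (m + 2) * (m + 1) := by nlinarith
        calc m.factorial * (m * m) ≤ m.factorial * ((m + 2) * (m + 1)) :=
              Nat.mul_le_mul_left _ h5
          _ = (m + 2) * ((m + 1) * m.factorial) := by ring
          _ = (m + 2).factorial := h4.symm
      exact_mod_cast hnatf
    have h3 : (m.factorial : ℝ) * R ≤ ((m + 2).factorial : ℝ) / (n : ℝ) := by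
      calc (m.factorial : ℝ) * R ≤ (m.factorial : ℝ) * ((m * m : ℝ) / (n : ℝ)) :=
            mul_le_mul_of_nonneg_left hR_le (by positivity)
        _ = ((m.factorial : ℝ) * (m * m : ℝ)) / (n : ℝ) := by ring
        _ ≤ ((m + 2).factorial : ℝ) / (n : ℝ) := by gcongr
    linarith

end
end

section
/- Let Z:[0,1]²→[0,1] be Lebesgue measurable, such that Z(x,·) is a cdf (non-decreasing, left-continuous, Z(x,0)=0) for every x∈[0,1], and such that ∫₀¹ Z(x,y)dx = y for every y∈[0,1]. Then for every α∈[0,1], the set of points x∈[0,1] at which the function Z(x,·) is discontinuous at the point y=α has Lebesgue measure zero. -/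
open MeasureTheory Filter Set

open scoped Classical

noncomputable section

/-- for every `α ∈ [0,1]`, the set of `x ∈ [0,1]` such that the
cdf `Z(x,·)` is discontinuous at `α` has Lebesgue measure zero. -/
theorem discontinuity_set_null
    (Z : ℝ → ℝ → ℝ)
    (hmeas : Measurable (fun p : Set.Icc (0:ℝ) 1 × Set.Icc (0:ℝ) 1 => Z (p.1 : ℝ) (p.2 : ℝ)))
    (hcdf : ∀ x ∈ Set.Icc (0:ℝ) 1, IsCDF (Z x))
    (hmass : ∀ y ∈ Set.Icc (0:ℝ) 1, (∫ x in Set.Icc (0:ℝ) 1, Z x y) = y)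
    (α : ℝ) (hα : α ∈ Set.Icc (0:ℝ) 1) :
    volume {x ∈ Set.Icc (0:ℝ) 1 | cdfDiscontAt (Z x) α} = 0 := by
  have hmeasI : MeasurableSet (Set.Icc (0:ℝ) 1) := measurableSet_Icc
  have hfin : volume (Set.Icc (0:ℝ) 1) = 1 := by simp [Real.volume_Icc]
  set μr := volume.restrict (Set.Icc (0:ℝ) 1) with hμr
  have hμr_univ : μr Set.univ = 1 := by
    rw [hμr, Measure.restrict_apply_univ, hfin]
  have haem : ∀ y ∈ Set.Icc (0:ℝ) 1, AEMeasurable (fun x => Z x y) μr := by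
    intro y hy
    apply aemeasurable_restrict_of_measurable_subtype hmeasI
    exact hmeas.comp (measurable_id.prodMk (measurable_const (a := (⟨y, hy⟩ : Set.Icc (0:ℝ) 1))))
  have hint : ∀ y ∈ Set.Icc (0:ℝ) 1, Integrable (fun x => Z x y) μr := by
    intro y hy
    refine Integrable.mono' (integrable_const 1) (haem y hy).aestronglyMeasurable ?_
    filter_upwards [ae_restrict_mem hmeasI] with x hx
    have h1 := (hcdf x hx).2.2.2 y hy
    rw [Real.norm_eq_abs, abs_le]
    exact ⟨by linarith [h1.1], h1.2⟩
  have hInt : ∀ y ∈ Set.Icc (0:ℝ) 1, ∫ x, Z x y ∂μr = y := hmass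
  -- key quantitative bound
  have key : ∀ ε : ℝ, 0 < ε → ∀ δ : ℝ, 0 < δ →
      (volume {x ∈ Set.Icc (0:ℝ) 1 | Z x α + ε ≤ cdfRightLim (Z x) α}).toReal ≤ δ / ε := by
    intro ε hε δ hδ
    -- construct f with ∫ f ≤ δ, f ≥ 0 a.e., and the set ⊆ {ε ≤ f}
    obtain ⟨f, hf_int, hf_nonneg, hf_le, hf_sub⟩ :
        ∃ f : ℝ → ℝ, Integrable f μr ∧ (0 ≤ᵐ[μr] f) ∧ (∫ x, f x ∂μr) ≤ δ ∧
          {x ∈ Set.Icc (0:ℝ) 1 | Z x α + ε ≤ cdfRightLim (Z x) α} ⊆ {x | ε ≤ f x} := by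
      rcases eq_or_lt_of_le hα.2 with h1 | h1
      · -- α = 1
        refine ⟨fun x => 1 - Z x 1, (integrable_const 1).sub (hint 1 (by norm_num)), ?_, ?_, ?_⟩
        · filter_upwards [ae_restrict_mem hmeasI] with x hx
          have h2 := (hcdf x hx).2.2.2 1 (by norm_num)
          simp only [Pi.zero_apply]
          linarith [h2.2]
        · rw [integral_sub (integrable_const 1) (hint 1 (by norm_num)),
            hInt 1 (by norm_num), integral_const, measureReal_def, hμr_univ]
          simp
          linarith
        · intro x hx
          obtain ⟨hxI, hxle⟩ := hx
          rw [h1] at hxle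
          have hcr : cdfRightLim (Z x) 1 = 1 := by simp [cdfRightLim]
          rw [hcr] at hxle
          simp only [Set.mem_setOf_eq]
          linarith
      · -- α < 1
        set α' := α + min δ (1 - α) with hα'def
        have hmin : 0 < min δ (1 - α) := lt_min hδ (by linarith)
        have hα'1 : α < α' := by rw [hα'def]; linarith [hmin]
        have hα'2 : α' ≤ 1 := by rw [hα'def]; linarith [min_le_right δ (1 - α)]
        have hα'I : α' ∈ Set.Icc (0:ℝ) 1 := ⟨by linarith [hα.1], hα'2⟩
        refine ⟨fun x => Z x α' - Z x α, (hint α' hα'I).sub (hint α hα), ?_, ?_, ?_⟩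
        · filter_upwards [ae_restrict_mem hmeasI] with x hx
          have hmono := (hcdf x hx).1
          have := hmono hα hα'I hα'1.le
          simp only [Pi.zero_apply]
          linarith
        · rw [integral_sub (hint α' hα'I) (hint α hα), hInt α' hα'I, hInt α hα]
          rw [hα'def]; linarith [min_le_left δ (1 - α)]
        · intro x hx
          obtain ⟨hxI, hxle⟩ := hx
          have hne1 : α ≠ 1 := ne_of_lt h1
          have hcle : cdfRightLim (Z x) α ≤ Z x α' := by
            rw [cdfRightLim, if_neg hne1]
            apply csInf_le
            · refine ⟨0, ?_⟩
              rintro v ⟨y, hy, rfl⟩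
              exact ((hcdf x hxI).2.2.2 y ⟨le_trans hα.1 hy.1.le, hy.2⟩).1
            · exact ⟨α', ⟨hα'1, hα'2⟩, rfl⟩
          simp only [Set.mem_setOf_eq]
          linarith
    -- Markov's inequality
    have hmarkov := mul_meas_ge_le_integral_of_nonneg hf_nonneg hf_int ε
    have hμfin : μr {x | ε ≤ f x} ≠ ⊤ := by
      refine ne_top_of_le_ne_top ?_ (measure_mono (Set.subset_univ _))
      rw [hμr_univ]; exact ENNReal.one_ne_top
    have hsub : volume {x ∈ Set.Icc (0:ℝ) 1 | Z x α + ε ≤ cdfRightLim (Z x) α} ≤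
        μr {x | ε ≤ f x} := by
      rw [hμr, Measure.restrict_apply' hmeasI]
      apply measure_mono
      intro x hx
      exact ⟨hf_sub hx, hx.1⟩
    calc (volume {x ∈ Set.Icc (0:ℝ) 1 | Z x α + ε ≤ cdfRightLim (Z x) α}).toReal
        ≤ (μr {x | ε ≤ f x}).toReal := ENNReal.toReal_mono hμfin hsub
      _ ≤ δ / ε := by
          rw [le_div_iff₀ hε, mul_comm]
          exact le_trans hmarkov hf_le
  -- each level set is null
  have hnull : ∀ ε : ℝ, 0 < ε →
      volume {x ∈ Set.Icc (0:ℝ) 1 | Z x α + ε ≤ cdfRightLim (Z x) α} = 0 := by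
    intro ε hε
    set S := {x ∈ Set.Icc (0:ℝ) 1 | Z x α + ε ≤ cdfRightLim (Z x) α} with hS
    have hSfin : volume S ≠ ⊤ := by
      refine ne_top_of_le_ne_top ?_ (measure_mono (fun x hx => hx.1))
      rw [hfin]; exact ENNReal.one_ne_top
    have h0 : (volume S).toReal ≤ 0 := by
      apply le_of_forall_pos_le_add
      intro η hη
      have := key ε hε (ε * η) (by positivity)
      calc (volume S).toReal ≤ ε * η / ε := this
        _ = η := by field_simp
        _ ≤ 0 + η := by linarith
    have := ENNReal.toReal_eq_zero_iff (volume S)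
    rcases this.mp (le_antisymm h0 ENNReal.toReal_nonneg) with h | h
    · exact h
    · exact absurd h hSfin
  -- conclude via countable union
  have hsub : {x ∈ Set.Icc (0:ℝ) 1 | cdfDiscontAt (Z x) α} ⊆
      ⋃ n : ℕ, {x ∈ Set.Icc (0:ℝ) 1 | Z x α + 1 / (n + 1) ≤ cdfRightLim (Z x) α} := by
    intro x hx
    obtain ⟨hxI, hxd⟩ := hx
    rw [cdfDiscontAt] at hxd
    obtain ⟨n, hn⟩ := exists_nat_one_div_lt (sub_pos.mpr hxd)
    exact Set.mem_iUnion.mpr ⟨n, hxI, by linarith⟩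
  refine le_antisymm ?_ zero_le
  calc volume {x ∈ Set.Icc (0:ℝ) 1 | cdfDiscontAt (Z x) α}
      ≤ volume (⋃ n : ℕ, {x ∈ Set.Icc (0:ℝ) 1 |
          Z x α + 1 / (n + 1) ≤ cdfRightLim (Z x) α}) := measure_mono hsub
    _ = 0 := measure_iUnion_null fun n => hnull _ (by positivity)

end
end

section
/- Let Z be a limit permutation and let D_Z ⊆ [0,1]² be the set of all pairs (x₁,x₂) such that the cdfs Z(x₁,·) and Z(x₂,·) have a common point of discontinuity. Then D_Z is Lebesgue measurable in [0,1]² and has Lebesgue measure zero. -/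
open MeasureTheory Filter Set

open scoped Classical

noncomputable section

/-! ### Auxiliary material for Statement 18 -/

/-- The section `x ↦ Z x y`, extended by `0` outside `[0,1]`. -/
def secZ (Z : ℝ → ℝ → ℝ) (y : ℝ) : ℝ → ℝ :=
  fun x => if _ : x ∈ Set.Icc (0:ℝ) 1 then Z x y else 0

/-- The grid approximation to the joint jump mass. -/
def gridSum (Z : ℝ → ℝ → ℝ) (m : ℕ) : ℝ × ℝ → ℝ := fun p =>
  ∑ k ∈ Finset.range m,
    (secZ Z (((k:ℝ)+1)/m) p.1 - secZ Z ((k:ℝ)/m) p.1) *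
      (secZ Z (((k:ℝ)+1)/m) p.2 - secZ Z ((k:ℝ)/m) p.2)

section Aux18

variable {Z : ℝ → ℝ → ℝ}

lemma secZ_of_mem {y x : ℝ} (hx : x ∈ Set.Icc (0:ℝ) 1) : secZ Z y x = Z x y := by
  simp [secZ, hx]

lemma measurable_secZ (hZ : LimitPerm Z) {y : ℝ} (hy : y ∈ Set.Icc (0:ℝ) 1) :
    Measurable (secZ Z y) := by
  have h1 : Measurable (fun x : Set.Icc (0:ℝ) 1 => Z (x:ℝ) y) := by
    have hc : Measurable (fun x : Set.Icc (0:ℝ) 1 =>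
        (x, (⟨y, hy⟩ : Set.Icc (0:ℝ) 1))) := measurable_id.prodMk measurable_const
    exact hZ.1.comp hc
  exact Measurable.dite h1 measurable_const measurableSet_Icc

lemma secZ_eq_indicator (y : ℝ) :
    secZ Z y = (Set.Icc (0:ℝ) 1).indicator (fun x => Z x y) := by
  funext x
  by_cases hx : x ∈ Set.Icc (0:ℝ) 1 <;> simp [secZ, Set.indicator, hx]

lemma integrable_secZ (hZ : LimitPerm Z) {y : ℝ} (hy : y ∈ Set.Icc (0:ℝ) 1) :
    Integrable (secZ Z y) := by
  have hone : Integrable ((Set.Icc (0:ℝ) 1).indicator (fun _ => (1:ℝ))) := by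
    refine (integrableOn_const ?_).integrable_indicator measurableSet_Icc
    simp
  refine hone.mono' (measurable_secZ hZ hy).aestronglyMeasurable ?_
  refine Filter.Eventually.of_forall fun x => ?_
  by_cases hx : x ∈ Set.Icc (0:ℝ) 1
  · have := ((hZ.2.1 x hx).1.2.2.2 y hy)
    simp only [secZ_of_mem hx, Set.indicator_of_mem hx, Real.norm_eq_abs]
    rw [abs_le]
    exact ⟨by linarith [this.1], this.2⟩
  · simp [secZ, hx]

lemma integral_secZ (hZ : LimitPerm Z) {y : ℝ} (hy : y ∈ Set.Icc (0:ℝ) 1) :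
    ∫ x, secZ Z y x = y := by
  rw [show (fun x => secZ Z y x) = secZ Z y from rfl, secZ_eq_indicator,
    integral_indicator measurableSet_Icc]
  exact hZ.2.2 y hy

lemma mem_div_Icc {m k : ℕ} (hk : k ≤ m) (hm : 0 < m) :
    ((k:ℝ)/m) ∈ Set.Icc (0:ℝ) 1 := by
  constructor
  · positivity
  · rw [div_le_one (by exact_mod_cast hm)]
    exact_mod_cast hk

lemma incr_nonneg (hZ : LimitPerm Z) {m k : ℕ} (hk : k < m) (x : ℝ) :
    0 ≤ secZ Z (((k:ℝ)+1)/m) x - secZ Z ((k:ℝ)/m) x := by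
  have hm : 0 < m := lt_of_le_of_lt (Nat.zero_le k) hk
  by_cases hx : x ∈ Set.Icc (0:ℝ) 1
  · rw [secZ_of_mem hx, secZ_of_mem hx, sub_nonneg]
    have h1 : ((k:ℝ)/m) ∈ Set.Icc (0:ℝ) 1 := mem_div_Icc hk.le hm
    have h2 : (((k:ℝ)+1)/m) ∈ Set.Icc (0:ℝ) 1 := by
      have := mem_div_Icc hk hm
      push_cast at this ⊢
      exact this
    exact (hZ.2.1 x hx).1.1 h1 h2 (by
      apply div_le_div_of_nonneg_right (by linarith) (by positivity))
  · simp [secZ, hx]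

lemma measurable_gridSum (hZ : LimitPerm Z) (m : ℕ) : Measurable (gridSum Z m) := by
  apply Finset.measurable_sum
  intro k hk
  have hkm : k < m := Finset.mem_range.mp hk
  have hm : 0 < m := lt_of_le_of_lt (Nat.zero_le k) hkm
  have h1 : ((k:ℝ)/m) ∈ Set.Icc (0:ℝ) 1 := mem_div_Icc hkm.le hm
  have h2 : (((k:ℝ)+1)/m) ∈ Set.Icc (0:ℝ) 1 := by
    have := mem_div_Icc hkm hm; push_cast at this ⊢; exact this
  exact (((measurable_secZ hZ h2).comp measurable_fst).sub
      ((measurable_secZ hZ h1).comp measurable_fst)).mul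
    (((measurable_secZ hZ h2).comp measurable_snd).sub
      ((measurable_secZ hZ h1).comp measurable_snd))

lemma integrable_gridSum (hZ : LimitPerm Z) (m : ℕ) : Integrable (gridSum Z m) := by
  apply integrable_finset_sum
  intro k hk
  have hkm : k < m := Finset.mem_range.mp hk
  have hm : 0 < m := lt_of_le_of_lt (Nat.zero_le k) hkm
  have h1 : ((k:ℝ)/m) ∈ Set.Icc (0:ℝ) 1 := mem_div_Icc hkm.le hm
  have h2 : (((k:ℝ)+1)/m) ∈ Set.Icc (0:ℝ) 1 := by
    have := mem_div_Icc hkm hm; push_cast at this ⊢; exact this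
  have hi : Integrable (fun x => secZ Z (((k:ℝ)+1)/m) x - secZ Z ((k:ℝ)/m) x) :=
    (integrable_secZ hZ h2).sub (integrable_secZ hZ h1)
  rw [Measure.volume_eq_prod]
  exact hi.mul_prod hi

lemma integral_gridSum (hZ : LimitPerm Z) {m : ℕ} (hm : 0 < m) :
    ∫ p, gridSum Z m p = 1 / m := by
  unfold gridSum
  rw [integral_finset_sum]
  swap
  · intro k hk
    have hkm : k < m := Finset.mem_range.mp hk
    have h1 : ((k:ℝ)/m) ∈ Set.Icc (0:ℝ) 1 := mem_div_Icc hkm.le hm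
    have h2 : (((k:ℝ)+1)/m) ∈ Set.Icc (0:ℝ) 1 := by
      have := mem_div_Icc hkm hm; push_cast at this ⊢; exact this
    have hi : Integrable (fun x => secZ Z (((k:ℝ)+1)/m) x - secZ Z ((k:ℝ)/m) x) :=
      (integrable_secZ hZ h2).sub (integrable_secZ hZ h1)
    rw [Measure.volume_eq_prod]
    exact hi.mul_prod hi
  have hstep : ∀ k ∈ Finset.range m,
      (∫ p : ℝ × ℝ, (secZ Z (((k:ℝ)+1)/m) p.1 - secZ Z ((k:ℝ)/m) p.1) *
        (secZ Z (((k:ℝ)+1)/m) p.2 - secZ Z ((k:ℝ)/m) p.2)) = (1/m) * (1/m) := by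
    intro k hk
    have hkm : k < m := Finset.mem_range.mp hk
    have h1 : ((k:ℝ)/m) ∈ Set.Icc (0:ℝ) 1 := mem_div_Icc hkm.le hm
    have h2 : (((k:ℝ)+1)/m) ∈ Set.Icc (0:ℝ) 1 := by
      have := mem_div_Icc hkm hm; push_cast at this ⊢; exact this
    have hint : (∫ x, (secZ Z (((k:ℝ)+1)/m) x - secZ Z ((k:ℝ)/m) x)) = 1/m := by
      rw [integral_sub (integrable_secZ hZ h2) (integrable_secZ hZ h1),
        integral_secZ hZ h2, integral_secZ hZ h1]
      have hm' : (m:ℝ) ≠ 0 := by exact_mod_cast hm.ne'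
      field_simp
      ring
    rw [Measure.volume_eq_prod]
    have hpm := integral_prod_mul (μ := volume) (ν := volume)
      (fun x : ℝ => secZ Z (((k:ℝ)+1)/m) x - secZ Z ((k:ℝ)/m) x)
      (fun x : ℝ => secZ Z (((k:ℝ)+1)/m) x - secZ Z ((k:ℝ)/m) x)
    exact hpm.trans (by rw [hint])
  rw [Finset.sum_congr rfl hstep, Finset.sum_const, Finset.card_range, nsmul_eq_mul]
  have hm' : (m:ℝ) ≠ 0 := by exact_mod_cast hm.ne'
  field_simp

/-- Markov's inequality for the grid sums. -/
lemma markov_gridSum (hZ : LimitPerm Z) {m : ℕ} (hm : 0 < m) {ε : ℝ} (hε : 0 < ε) :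
    ENNReal.ofReal ε * volume {p : ℝ × ℝ | ε ≤ gridSum Z m p} ≤ ENNReal.ofReal (1/m) := by
  have hnn : 0 ≤ᵐ[volume] gridSum Z m := by
    refine Filter.Eventually.of_forall fun p => ?_
    exact Finset.sum_nonneg fun k hk =>
      mul_nonneg (incr_nonneg hZ (Finset.mem_range.mp hk) p.1)
        (incr_nonneg hZ (Finset.mem_range.mp hk) p.2)
  have key : ENNReal.ofReal (∫ p, gridSum Z m p) =
      ∫⁻ p, ENNReal.ofReal (gridSum Z m p) :=
    ofReal_integral_eq_lintegral_ofReal (integrable_gridSum hZ m) hnn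
  have hmono : volume {p : ℝ × ℝ | ε ≤ gridSum Z m p} ≤
      volume {p : ℝ × ℝ | ENNReal.ofReal ε ≤ ENNReal.ofReal (gridSum Z m p)} := by
    apply measure_mono
    intro p hp
    exact ENNReal.ofReal_le_ofReal hp
  calc ENNReal.ofReal ε * volume {p : ℝ × ℝ | ε ≤ gridSum Z m p}
      ≤ ENNReal.ofReal ε *
        volume {p : ℝ × ℝ | ENNReal.ofReal ε ≤ ENNReal.ofReal (gridSum Z m p)} := by
        exact mul_le_mul_right hmono _
    _ ≤ ∫⁻ p, ENNReal.ofReal (gridSum Z m p) :=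
        mul_meas_ge_le_lintegral₀
          ((measurable_gridSum hZ m).ennreal_ofReal.aemeasurable) _
    _ = ENNReal.ofReal (∫ p, gridSum Z m p) := key.symm
    _ = ENNReal.ofReal (1/m) := by rw [integral_gridSum hZ hm]

/-- The key pointwise lower bound: if both coordinates have a common
discontinuity, then every grid sum is at least the product of the jumps. -/
lemma gridSum_lower_bound (hZ : LimitPerm Z) {p : ℝ × ℝ}
    (hx1 : p.1 ∈ Set.Icc (0:ℝ) 1) (hx2 : p.2 ∈ Set.Icc (0:ℝ) 1)
    {α : ℝ} (hα : α ∈ Set.Icc (0:ℝ) 1) (hα1 : α < 1)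
    (d1 : cdfDiscontAt (Z p.1) α) (d2 : cdfDiscontAt (Z p.2) α)
    {m : ℕ} (hm : 0 < m) :
    (cdfRightLim (Z p.1) α - Z p.1 α) * (cdfRightLim (Z p.2) α - Z p.2 α) ≤
      gridSum Z m p := by
  set n : ℕ := (⌊(m:ℝ) * α⌋).toNat with hn
  have hα0 : 0 ≤ α := hα.1
  have hmpos : (0:ℝ) < m := by exact_mod_cast hm
  have hfl0 : (0:ℤ) ≤ ⌊(m:ℝ) * α⌋ := Int.floor_nonneg.2 (by positivity)
  have hcast : ((n:ℤ)) = ⌊(m:ℝ) * α⌋ := Int.toNat_of_nonneg hfl0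
  have hnle : (n:ℝ) ≤ (m:ℝ) * α := by
    have := Int.floor_le ((m:ℝ) * α)
    rw [← hcast] at this
    exact_mod_cast this
  have hnlt : (m:ℝ) * α < (n:ℝ) + 1 := by
    have := Int.lt_floor_add_one ((m:ℝ) * α)
    rw [← hcast] at this
    exact_mod_cast this
  have hnm : n < m := by
    have h1 : (n:ℝ) < m := lt_of_le_of_lt hnle (by nlinarith)
    exact_mod_cast h1
  have hdiv1 : (n:ℝ)/m ≤ α := by
    rw [div_le_iff₀ hmpos]
    linarith [hnle]
  have hdiv2 : α < ((n:ℝ)+1)/m := by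
    rw [lt_div_iff₀ hmpos]
    linarith [hnlt]
  have hdiv3 : ((n:ℝ)+1)/m ≤ 1 := by
    rw [div_le_one hmpos]
    exact_mod_cast hnm
  have hmem1 : ((n:ℝ)/m) ∈ Set.Icc (0:ℝ) 1 := mem_div_Icc hnm.le hm
  have hmem2 : (((n:ℝ)+1)/m) ∈ Set.Icc (0:ℝ) 1 :=
    ⟨by positivity, hdiv3⟩
  -- the coordinatewise bound
  have coord : ∀ x : ℝ, x ∈ Set.Icc (0:ℝ) 1 → cdfDiscontAt (Z x) α →
      cdfRightLim (Z x) α - Z x α ≤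
        secZ Z (((n:ℝ)+1)/m) x - secZ Z ((n:ℝ)/m) x := by
    intro x hx _
    rw [secZ_of_mem hx, secZ_of_mem hx]
    have hcdf := (hZ.2.1 x hx).1
    have hlow : Z x ((n:ℝ)/m) ≤ Z x α := hcdf.1 hmem1 hα hdiv1
    have hhigh : cdfRightLim (Z x) α ≤ Z x (((n:ℝ)+1)/m) := by
      rw [cdfRightLim, if_neg hα1.ne]
      apply csInf_le
      · refine ⟨0, ?_⟩
        rintro _ ⟨t, ht, rfl⟩
        have htI : t ∈ Set.Icc (0:ℝ) 1 := ⟨le_trans hα0 ht.1.le, ht.2⟩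
        exact (hcdf.2.2.2 t htI).1
      · exact ⟨((n:ℝ)+1)/m, ⟨hdiv2, hdiv3⟩, rfl⟩
    linarith
  have e1 := coord p.1 hx1 d1
  have e2 := coord p.2 hx2 d2
  have hε1 : 0 < cdfRightLim (Z p.1) α - Z p.1 α := sub_pos.2 d1
  have hε2 : 0 < cdfRightLim (Z p.2) α - Z p.2 α := sub_pos.2 d2
  have hterm : (cdfRightLim (Z p.1) α - Z p.1 α) * (cdfRightLim (Z p.2) α - Z p.2 α) ≤
      (secZ Z (((n:ℝ)+1)/m) p.1 - secZ Z ((n:ℝ)/m) p.1) *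
        (secZ Z (((n:ℝ)+1)/m) p.2 - secZ Z ((n:ℝ)/m) p.2) :=
    mul_le_mul e1 e2 hε2.le (incr_nonneg hZ hnm p.1)
  refine le_trans hterm ?_
  exact Finset.single_le_sum
    (fun k hk => mul_nonneg (incr_nonneg hZ (Finset.mem_range.mp hk) p.1)
      (incr_nonneg hZ (Finset.mem_range.mp hk) p.2))
    (Finset.mem_range.mpr hnm)

end Aux18

/-- the set of pairs `(x₁,x₂) ∈ [0,1]²` such that `Z(x₁,·)` and
`Z(x₂,·)` have a common discontinuity is Lebesgue measurable and null. -/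
theorem common_discontinuity_set_null (Z : ℝ → ℝ → ℝ) (hZ : LimitPerm Z) :
    NullMeasurableSet {p : ℝ × ℝ | p.1 ∈ Set.Icc (0:ℝ) 1 ∧ p.2 ∈ Set.Icc (0:ℝ) 1 ∧
        ∃ α ∈ Set.Icc (0:ℝ) 1, cdfDiscontAt (Z p.1) α ∧ cdfDiscontAt (Z p.2) α} volume ∧
      volume {p : ℝ × ℝ | p.1 ∈ Set.Icc (0:ℝ) 1 ∧ p.2 ∈ Set.Icc (0:ℝ) 1 ∧
        ∃ α ∈ Set.Icc (0:ℝ) 1, cdfDiscontAt (Z p.1) α ∧ cdfDiscontAt (Z p.2) α} = 0 := by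
  set D : Set (ℝ × ℝ) := {p : ℝ × ℝ | p.1 ∈ Set.Icc (0:ℝ) 1 ∧ p.2 ∈ Set.Icc (0:ℝ) 1 ∧
      ∃ α ∈ Set.Icc (0:ℝ) 1, cdfDiscontAt (Z p.1) α ∧ cdfDiscontAt (Z p.2) α} with hD
  -- the measurable null superset
  set A : ℕ → Set (ℝ × ℝ) :=
    fun j => ⋂ m : ℕ, {p : ℝ × ℝ | 1 / ((j:ℝ) + 1) ≤ gridSum Z (m + 1) p} with hA
  have hAmeas : ∀ j, MeasurableSet (A j) := by
    intro j
    exact MeasurableSet.iInter fun m =>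
      measurableSet_le measurable_const (measurable_gridSum hZ (m + 1))
  have hAnull : ∀ j, volume (A j) = 0 := by
    intro j
    have hεpos : (0:ℝ) < 1 / ((j:ℝ) + 1) := by positivity
    set c : ENNReal := ENNReal.ofReal (1 / ((j:ℝ) + 1)) with hc
    have hcpos : c ≠ 0 := by
      simp only [hc, ne_eq, ENNReal.ofReal_eq_zero, not_le]
      exact hεpos
    have hbound : ∀ m : ℕ, c * volume (A j) ≤ ENNReal.ofReal (1 / ((m:ℝ) + 1)) := by
      intro m
      have hsub : A j ⊆ {p : ℝ × ℝ | 1 / ((j:ℝ) + 1) ≤ gridSum Z (m + 1) p} :=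
        Set.iInter_subset _ m
      calc c * volume (A j)
          ≤ c * volume {p : ℝ × ℝ | 1 / ((j:ℝ) + 1) ≤ gridSum Z (m + 1) p} :=
            mul_le_mul_right (measure_mono hsub) _
        _ ≤ ENNReal.ofReal (1 / (((m:ℕ) + 1 : ℕ) : ℝ)) :=
            markov_gridSum hZ (Nat.succ_pos m) hεpos
        _ = ENNReal.ofReal (1 / ((m:ℝ) + 1)) := by push_cast; ring_nf
    have htend : Tendsto (fun m : ℕ => ENNReal.ofReal (1 / ((m:ℝ) + 1))) atTop (nhds 0) := by
      have := ENNReal.tendsto_ofReal tendsto_one_div_add_atTop_nhds_zero_nat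
      simpa using this
    have hle0 : c * volume (A j) ≤ 0 :=
      ge_of_tendsto' htend hbound
    have : c * volume (A j) = 0 := le_antisymm hle0 zero_le
    rcases mul_eq_zero.mp this with h | h
    · exact absurd h hcpos
    · exact h
  have hNnull : volume (⋃ j, A j) = 0 := measure_iUnion_null hAnull
  -- D is contained in the union of the A j
  have hsub : D ⊆ ⋃ j, A j := by
    rintro p ⟨hx1, hx2, α, hα, d1, d2⟩
    have hα1 : α < 1 := by
      rcases lt_or_eq_of_le hα.2 with h | h
      · exact h
      · exfalso
        have hz1 : Z p.1 1 = 1 := (hZ.2.1 p.1 hx1).2.2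
        have : Z p.1 α < cdfRightLim (Z p.1) α := d1
        rw [h, hz1, cdfRightLim, if_pos rfl] at this
        exact lt_irrefl 1 this
    set ε : ℝ := (cdfRightLim (Z p.1) α - Z p.1 α) * (cdfRightLim (Z p.2) α - Z p.2 α)
      with hε
    have hεpos : 0 < ε :=
      mul_pos (sub_pos.2 d1) (sub_pos.2 d2)
    obtain ⟨j, hj⟩ := exists_nat_one_div_lt hεpos
    refine Set.mem_iUnion.mpr ⟨j, Set.mem_iInter.mpr fun m => ?_⟩
    have hkey := gridSum_lower_bound hZ hx1 hx2 hα hα1 d1 d2 (Nat.succ_pos m)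
    exact le_trans hj.le hkey
  have hDnull : volume D = 0 := measure_mono_null hsub hNnull
  exact ⟨NullMeasurableSet.of_null hDnull, hDnull⟩

end
end
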